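/- The limiting pattern is well defined on pattern classes: if u, u' ∈ R^p satisfy patt(u) = patt(u'), then patt_{β⁰}(u) = patt_{β⁰}(u') for any β⁰ ∈ R^p. -/

import Mathlib

open scoped Classical

/-- The SLOPE pattern of `v ∈ ℝ^p`: `patt v i = rank(|v i|) * sgn(v i)`, ranking among
the distinct absolute values (zero entries get 0). -/
noncomputable def slopePatt {p : ℕ} (v : Fin p → ℝ) : Fin p → ℤ := fun i =>
  (((Finset.univ.image fun j => |v j|).filter fun a => 0 < a ∧ a ≤ |v i|).card : ℤ) *
    (if 0 < v i then 1 else if v i < 0 then -1 else 0)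

open Filter Set

section Aux

/-- Resolution of `|b + t*x|` for small positive `t`, when `b ≠ 0`. -/
lemma evAbs (b x : ℝ) (hb : b ≠ 0) :
    ∀ᶠ t in nhdsWithin (0:ℝ) (Set.Ioi 0),
      |b + t * x| = |b| + t * (Real.sign b * x) ∧ (0 < b + t * x ↔ 0 < b) ∧
        (b + t * x < 0 ↔ b < 0) := by
  have hmem : Set.Ioo (0:ℝ) (|b| / (|x| + 1)) ∈ nhdsWithin (0:ℝ) (Set.Ioi 0) := by
    refine Ioo_mem_nhdsGT_of_mem ⟨le_rfl, ?_⟩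
    have : 0 < |b| := abs_pos.2 hb
    positivity
  filter_upwards [hmem] with t ht
  obtain ⟨ht0, ht1⟩ := ht
  have hx1 : 0 < |x| + 1 := by positivity
  rw [lt_div_iff₀ hx1] at ht1
  have hkey : t * |x| < |b| := by nlinarith
  rcases hb.lt_or_gt with hneg | hpos
  · have h1 : b + t * x < 0 := by
      have : t * x ≤ t * |x| := by nlinarith [le_abs_self x]
      have hb' : |b| = -b := abs_of_neg hneg
      linarith
    refine ⟨?_, ?_, ?_⟩
    · rw [abs_of_neg h1, abs_of_neg hneg, Real.sign_of_neg hneg]; ring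
    · constructor <;> intro hh <;> [linarith; linarith]
    · constructor <;> intro _ <;> [exact hneg; exact h1]
  · have h1 : 0 < b + t * x := by
      have : -(t * |x|) ≤ t * x := by nlinarith [neg_abs_le x]
      have hb' : |b| = b := abs_of_pos hpos
      linarith
    refine ⟨?_, ?_, ?_⟩
    · rw [abs_of_pos h1, abs_of_pos hpos, Real.sign_of_pos hpos]; ring
    · constructor <;> intro _ <;> [exact hpos; exact h1]
    · constructor <;> intro hh <;> [linarith; linarith]

lemma evLt (b c x y : ℝ) (h : |c| < |b|) :
    ∀ᶠ t in nhdsWithin (0:ℝ) (Set.Ioi 0), |c + t * y| < |b + t * x| := by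
  have hmem : Set.Ioo (0:ℝ) ((|b| - |c|) / (|x| + |y| + 1)) ∈ nhdsWithin (0:ℝ) (Set.Ioi 0) := by
    refine Ioo_mem_nhdsGT_of_mem ⟨le_rfl, ?_⟩
    have : 0 < |b| - |c| := by linarith
    positivity
  filter_upwards [hmem] with t ht
  obtain ⟨ht0, ht1⟩ := ht
  have hx1 : 0 < |x| + |y| + 1 := by positivity
  rw [lt_div_iff₀ hx1] at ht1
  have A : |c + t * y| ≤ |c| + t * |y| := by
    have := abs_add_le c (t * y)
    rw [abs_mul, abs_of_pos ht0] at this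
    linarith
  have B : |b| - t * |x| ≤ |b + t * x| := by
    have h0 := abs_add_le (b + t * x) (-(t * x))
    simp only [add_neg_cancel_right, abs_neg] at h0
    rw [abs_mul, abs_of_pos ht0] at h0
    linarith
  nlinarith [abs_nonneg x, abs_nonneg y]

/-- A comparison `x ≤ y` is determined by the signs of `x, y` and the comparisons of their
absolute values. -/
lemma leIff (x y x' y' : ℝ)
    (hx1 : 0 < x ↔ 0 < x') (hx2 : x < 0 ↔ x' < 0)
    (hy1 : 0 < y ↔ 0 < y') (hy2 : y < 0 ↔ y' < 0)
    (hxy : |x| ≤ |y| ↔ |x'| ≤ |y'|) (hyx : |y| ≤ |x| ↔ |y'| ≤ |x'|) :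
    x ≤ y ↔ x' ≤ y' := by
  have char : ∀ a b : ℝ, a ≤ b ↔
      ((a ≤ 0 ∧ 0 ≤ b) ∨ (0 ≤ a ∧ 0 ≤ b ∧ |a| ≤ |b|) ∨ (a ≤ 0 ∧ b ≤ 0 ∧ |b| ≤ |a|)) := by
    intro a b
    constructor
    · intro hab
      rcases le_or_gt a 0 with ha | ha
      · rcases le_or_gt 0 b with hb | hb
        · exact Or.inl ⟨ha, hb⟩
        · refine Or.inr (Or.inr ⟨ha, hb.le, ?_⟩)
          rw [abs_of_nonpos ha, abs_of_nonpos hb.le]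
          linarith
      · refine Or.inr (Or.inl ⟨ha.le, le_trans ha.le hab, ?_⟩)
        rw [abs_of_pos ha, abs_of_nonneg (le_trans ha.le hab)]
        exact hab
    · rintro (⟨h1, h2⟩ | ⟨h1, h2, h3⟩ | ⟨h1, h2, h3⟩)
      · linarith
      · rw [abs_of_nonneg h1, abs_of_nonneg h2] at h3; exact h3
      · rw [abs_of_nonpos h1, abs_of_nonpos h2] at h3; linarith
  rw [char x y, char x' y']
  have e1 : x ≤ 0 ↔ x' ≤ 0 := by rw [← not_lt, ← not_lt, hx1]
  have e2 : 0 ≤ x ↔ 0 ≤ x' := by rw [← not_lt, ← not_lt, hx2]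
  have e3 : y ≤ 0 ↔ y' ≤ 0 := by rw [← not_lt, ← not_lt, hy1]
  have e4 : 0 ≤ y ↔ 0 ≤ y' := by rw [← not_lt, ← not_lt, hy2]
  rw [e1, e2, e3, e4, hxy, hyx]

lemma evSign (b x x' : ℝ) (h1 : 0 < x ↔ 0 < x') (h2 : x < 0 ↔ x' < 0) :
    ∀ᶠ t in nhdsWithin (0:ℝ) (Set.Ioi 0),
      (0 < b + t * x ↔ 0 < b + t * x') ∧ (b + t * x < 0 ↔ b + t * x' < 0) := by
  by_cases hb : b = 0
  · subst hb
    filter_upwards [self_mem_nhdsWithin] with t ht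
    have ht0 : (0:ℝ) < t := ht
    constructor
    · rw [zero_add, zero_add, mul_pos_iff_of_pos_left ht0, mul_pos_iff_of_pos_left ht0]
      exact h1
    · constructor <;> intro hh
      · have : x < 0 := by nlinarith
        have : x' < 0 := h2.1 this
        nlinarith
      · have : x' < 0 := by nlinarith
        have : x < 0 := h2.2 this
        nlinarith
  · filter_upwards [evAbs b x hb, evAbs b x' hb] with t hA hA'
    exact ⟨by rw [hA.2.1, hA'.2.1], by rw [hA.2.2, hA'.2.2]⟩

lemma signCases (b : ℝ) (hb : b ≠ 0) : Real.sign b = 1 ∨ Real.sign b = -1 := by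
  rcases hb.lt_or_gt with h | h
  · exact Or.inr (Real.sign_of_neg h)
  · exact Or.inl (Real.sign_of_pos h)

lemma evCmp (bi bj xi xj xi' xj' : ℝ)
    (hi1 : 0 < xi ↔ 0 < xi') (hi2 : xi < 0 ↔ xi' < 0)
    (hj1 : 0 < xj ↔ 0 < xj') (hj2 : xj < 0 ↔ xj' < 0)
    (hji : |xj| ≤ |xi| ↔ |xj'| ≤ |xi'|) (hij : |xi| ≤ |xj| ↔ |xi'| ≤ |xj'|) :
    ∀ᶠ t in nhdsWithin (0:ℝ) (Set.Ioi 0),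
      (|bj + t * xj| ≤ |bi + t * xi| ↔ |bj + t * xj'| ≤ |bi + t * xi'|) := by
  by_cases hbi : bi = 0
  · by_cases hbj : bj = 0
    · subst hbi; subst hbj
      filter_upwards [self_mem_nhdsWithin] with t ht
      have ht0 : (0:ℝ) < t := ht
      simp only [zero_add, abs_mul, abs_of_pos ht0]
      rw [mul_le_mul_iff_right₀ ht0, mul_le_mul_iff_right₀ ht0]
      exact hji
    · subst hbi
      have h0 : |(0:ℝ)| < |bj| := by simpa using abs_pos.2 hbj
      filter_upwards [evLt bj 0 xj xi h0, evLt bj 0 xj' xi' h0] with t hlt hlt'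
      constructor <;> intro hh
      · exact absurd (lt_of_le_of_lt hh hlt) (lt_irrefl _)
      · exact absurd (lt_of_le_of_lt hh hlt') (lt_irrefl _)
  · by_cases hbj : bj = 0
    · subst hbj
      have h0 : |(0:ℝ)| < |bi| := by simpa using abs_pos.2 hbi
      filter_upwards [evLt bi 0 xi xj h0, evLt bi 0 xi' xj' h0] with t hlt hlt'
      exact iff_of_true hlt.le hlt'.le
    · rcases lt_trichotomy |bj| |bi| with hlt | heq | hgt
      · filter_upwards [evLt bi bj xi xj hlt, evLt bi bj xi' xj' hlt] with t hlt1 hlt2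
        exact iff_of_true hlt1.le hlt2.le
      · filter_upwards [evAbs bi xi hbi, evAbs bj xj hbj, evAbs bi xi' hbi,
          evAbs bj xj' hbj, self_mem_nhdsWithin] with t hA hB hA' hB' ht
        have ht0 : (0:ℝ) < t := ht
        rw [hA.1, hB.1, hA'.1, hB'.1, heq, add_le_add_iff_left, add_le_add_iff_left,
          mul_le_mul_iff_right₀ ht0, mul_le_mul_iff_right₀ ht0]
        rcases signCases bi hbi with hsi | hsi <;> rcases signCases bj hbj with hsj | hsj <;>
          rw [hsi, hsj] <;>
        · simp only [one_mul, neg_one_mul]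
          refine leIff _ _ _ _ ?_ ?_ ?_ ?_ ?_ ?_ <;>
            (try simp only [abs_neg, neg_pos, neg_lt_zero]) <;>
            first
              | exact hj1 | exact hj2 | exact hi1 | exact hi2 | exact hji | exact hij
      · filter_upwards [evLt bj bi xj xi hgt, evLt bj bi xj' xi' hgt] with t hlt1 hlt2
        constructor <;> intro hh
        · exact absurd (lt_of_le_of_lt hh hlt1) (lt_irrefl _)
        · exact absurd (lt_of_le_of_lt hh hlt2) (lt_irrefl _)

noncomputable def srank {p : ℕ} (v : Fin p → ℝ) (i : Fin p) : ℕ :=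
  ((Finset.univ.image fun j => |v j|).filter fun a => 0 < a ∧ a ≤ |v i|).card

lemma slopePatt_eq {p : ℕ} (v : Fin p → ℝ) (i : Fin p) :
    slopePatt v i = (srank v i : ℤ) * (if 0 < v i then 1 else if v i < 0 then -1 else 0) := rfl

lemma srank_pos {p : ℕ} (v : Fin p → ℝ) (i : Fin p) (h : v i ≠ 0) : 0 < srank v i := by
  rw [srank, Finset.card_pos]
  exact ⟨|v i|, Finset.mem_filter.2 ⟨Finset.mem_image_of_mem _ (Finset.mem_univ i),
    abs_pos.2 h, le_rfl⟩⟩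

lemma srank_zero {p : ℕ} (v : Fin p → ℝ) (i : Fin p) (h : v i = 0) : srank v i = 0 := by
  rw [srank, Finset.card_eq_zero, Finset.filter_eq_empty_iff]
  intro a _
  rw [h, abs_zero]
  intro hc
  linarith [hc.1, hc.2]

lemma srank_le_iff {p : ℕ} (v : Fin p → ℝ) (i j : Fin p) :
    srank v i ≤ srank v j ↔ |v i| ≤ |v j| := by
  constructor
  · intro hle
    by_contra hc
    push_neg at hc
    have hvi : v i ≠ 0 := by
      intro h0
      rw [h0, abs_zero] at hc
      exact absurd hc (not_lt.2 (abs_nonneg _))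
    have hsub : ((Finset.univ.image fun k => |v k|).filter fun a => 0 < a ∧ a ≤ |v j|) ⊂
        ((Finset.univ.image fun k => |v k|).filter fun a => 0 < a ∧ a ≤ |v i|) := by
      constructor
      · exact Finset.monotone_filter_right _ (fun a _ ha => ⟨ha.1, le_trans ha.2 hc.le⟩)
      · intro hcon
        have hmem : |v i| ∈ (Finset.univ.image fun k => |v k|).filter
            fun a => 0 < a ∧ a ≤ |v i| := Finset.mem_filter.2
          ⟨Finset.mem_image_of_mem _ (Finset.mem_univ i), abs_pos.2 hvi, le_rfl⟩
        have := (Finset.mem_filter.1 (hcon hmem)).2.2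
        exact absurd this (not_le.2 hc)
    exact absurd hle (not_le.2 (Finset.card_lt_card hsub))
  · intro hle
    exact Finset.card_le_card (Finset.monotone_filter_right _
      (fun a _ ha => ⟨ha.1, le_trans ha.2 hle⟩))

lemma patt_pos_iff {p : ℕ} (v : Fin p → ℝ) (i : Fin p) : 0 < slopePatt v i ↔ 0 < v i := by
  rw [slopePatt_eq]
  rcases lt_trichotomy (v i) 0 with h | h | h
  · rw [if_neg (by linarith), if_pos h]
    constructor
    · intro hh
      have : (0:ℤ) ≤ (srank v i : ℤ) := Int.natCast_nonneg _
      nlinarith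
    · intro hh; linarith
  · simp [h]
  · rw [if_pos h, mul_one]
    have := srank_pos v i (by linarith)
    constructor
    · intro _; exact h
    · intro _; exact_mod_cast this

lemma patt_neg_iff {p : ℕ} (v : Fin p → ℝ) (i : Fin p) : slopePatt v i < 0 ↔ v i < 0 := by
  rw [slopePatt_eq]
  rcases lt_trichotomy (v i) 0 with h | h | h
  · rw [if_neg (by linarith), if_pos h, mul_neg_one]
    have := srank_pos v i (by linarith)
    constructor
    · intro _; exact h
    · intro _
      have : (0:ℤ) < (srank v i : ℤ) := by exact_mod_cast this
      linarith
  · simp [h]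
  · rw [if_pos h, mul_one]
    constructor
    · intro hh
      have : (0:ℤ) ≤ (srank v i : ℤ) := Int.natCast_nonneg _
      linarith
    · intro hh; linarith

lemma patt_natAbs {p : ℕ} (v : Fin p → ℝ) (i : Fin p) (h : v i ≠ 0) :
    (slopePatt v i).natAbs = srank v i := by
  rw [slopePatt_eq]
  rcases h.lt_or_gt with hh | hh
  · rw [if_neg (by linarith), if_pos hh, mul_neg_one]
    simp
  · rw [if_pos hh, mul_one]
    simp

lemma card_image_congr {α β γ : Type*} [DecidableEq β] [DecidableEq γ]
    (s : Finset α) (f : α → β) (g : α → γ)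
    (h : ∀ a b : α, f a = f b ↔ g a = g b) :
    (s.image f).card = (s.image g).card := by
  have h1 : (s.image fun a => (f a, g a)).image Prod.fst = s.image f := by
    rw [Finset.image_image]; rfl
  have h2 : (s.image fun a => (f a, g a)).image Prod.snd = s.image g := by
    rw [Finset.image_image]; rfl
  have i1 : Set.InjOn (Prod.fst : β × γ → β) ↑(s.image fun a => (f a, g a)) := by
    intro x hx y hy hxy
    simp only [Finset.coe_image, Set.mem_image, Finset.mem_coe] at hx hy
    obtain ⟨a, _, rfl⟩ := hx
    obtain ⟨b, _, rfl⟩ := hy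
    simp only at hxy ⊢
    exact Prod.ext hxy ((h a b).1 hxy)
  have i2 : Set.InjOn (Prod.snd : β × γ → γ) ↑(s.image fun a => (f a, g a)) := by
    intro x hx y hy hxy
    simp only [Finset.coe_image, Set.mem_image, Finset.mem_coe] at hx hy
    obtain ⟨a, _, rfl⟩ := hx
    obtain ⟨b, _, rfl⟩ := hy
    simp only at hxy ⊢
    exact Prod.ext ((h a b).2 hxy) hxy
  rw [← h1, ← h2, Finset.card_image_of_injOn i1, Finset.card_image_of_injOn i2]

end Aux

/-- The limiting pattern is well defined on pattern classes: if `patt u = patt u'`,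
then the limiting patterns of `u` and `u'` with respect to any `β⁰` coincide, i.e.
`patt(β⁰ + t•u) = patt(β⁰ + t•u')` for all sufficiently small `t > 0`. -/
theorem stmt13 {p : ℕ} (β u u' : Fin p → ℝ) (h : slopePatt u = slopePatt u') :
    ∃ ε > (0 : ℝ), ∀ t : ℝ, 0 < t → t < ε →
      slopePatt (fun i => β i + t * u i) = slopePatt (fun i => β i + t * u' i) := by
  have hpos : ∀ i, (0 < u i ↔ 0 < u' i) := fun i => by
    rw [← patt_pos_iff u i, ← patt_pos_iff u' i, h]
  have hneg : ∀ i, (u i < 0 ↔ u' i < 0) := fun i => by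
    rw [← patt_neg_iff u i, ← patt_neg_iff u' i, h]
  have hz : ∀ i, u i = 0 → u' i = 0 := by
    intro i h0
    by_contra hc
    rcases (Ne.lt_or_gt hc) with hl | hl
    · have := (hneg i).2 hl; rw [h0] at this; exact absurd this (lt_irrefl _)
    · have := (hpos i).2 hl; rw [h0] at this; exact absurd this (lt_irrefl _)
  have hR : ∀ i, srank u i = srank u' i := by
    intro i
    by_cases h0 : u i = 0
    · rw [srank_zero u i h0, srank_zero u' i (hz i h0)]
    · have h0' : u' i ≠ 0 := by
        intro hc
        rcases (Ne.lt_or_gt h0) with hl | hl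
        · have := (hneg i).1 hl; rw [hc] at this; exact absurd this (lt_irrefl _)
        · have := (hpos i).1 hl; rw [hc] at this; exact absurd this (lt_irrefl _)
      rw [← patt_natAbs u i h0, ← patt_natAbs u' i h0', h]
  have habs : ∀ i j, |u i| ≤ |u j| ↔ |u' i| ≤ |u' j| := fun i j => by
    rw [← srank_le_iff, ← srank_le_iff, hR i, hR j]
  have hEv : ∀ᶠ t in nhdsWithin (0:ℝ) (Set.Ioi 0), ∀ i j : Fin p,
      ((|β j + t * u j| ≤ |β i + t * u i| ↔ |β j + t * u' j| ≤ |β i + t * u' i|) ∧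
        ((0 < β i + t * u i ↔ 0 < β i + t * u' i) ∧
          (β i + t * u i < 0 ↔ β i + t * u' i < 0))) := by
    rw [eventually_all]
    intro i
    rw [eventually_all]
    intro j
    exact (evCmp (β i) (β j) (u i) (u j) (u' i) (u' j) (hpos i) (hneg i) (hpos j) (hneg j)
      (habs j i) (habs i j)).and (evSign (β i) (u i) (u' i) (hpos i) (hneg i))
  obtain ⟨ε, hε, hsub⟩ := mem_nhdsGT_iff_exists_Ioo_subset.1 hEv
  refine ⟨ε, hε, ?_⟩
  intro t ht0 htε
  have hP := hsub ⟨ht0, htε⟩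
  funext i
  have hsgn := (hP i i).2
  have hcmp : ∀ a b : Fin p,
      (|β b + t * u b| ≤ |β a + t * u a| ↔ |β b + t * u' b| ≤ |β a + t * u' a|) :=
    fun a b => (hP a b).1
  have hcard : ((Finset.univ.image fun j => |β j + t * u j|).filter
        fun a => 0 < a ∧ a ≤ |β i + t * u i|).card =
      ((Finset.univ.image fun j => |β j + t * u' j|).filter
        fun a => 0 < a ∧ a ≤ |β i + t * u' i|).card := by
    rw [Finset.filter_image, Finset.filter_image]
    have hfil : (Finset.univ.filter fun j =>
          0 < |β j + t * u j| ∧ |β j + t * u j| ≤ |β i + t * u i|) =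
        (Finset.univ.filter fun j =>
          0 < |β j + t * u' j| ∧ |β j + t * u' j| ≤ |β i + t * u' i|) := by
      ext j
      simp only [Finset.mem_filter, Finset.mem_univ, true_and]
      have hpos' : 0 < |β j + t * u j| ↔ 0 < |β j + t * u' j| := by
        rw [abs_pos, abs_pos]
        have := (hP j j).2
        constructor <;> intro hne <;> intro hc
        · rcases (Ne.lt_or_gt hne) with hl | hl
          · have := this.2.1 hl; rw [hc] at this; exact absurd this (lt_irrefl _)
          · have := this.1.1 hl; rw [hc] at this; exact absurd this (lt_irrefl _)
        · rcases (Ne.lt_or_gt hne) with hl | hl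
          · have := this.2.2 hl; rw [hc] at this; exact absurd this (lt_irrefl _)
          · have := this.1.2 hl; rw [hc] at this; exact absurd this (lt_irrefl _)
      rw [hpos', hcmp i j]
    rw [hfil]
    exact card_image_congr _ _ _ (fun a b => by
      rw [le_antisymm_iff, le_antisymm_iff, hcmp a b, hcmp b a])
  have hfac : (if 0 < β i + t * u i then (1:ℤ) else if β i + t * u i < 0 then -1 else 0) =
      (if 0 < β i + t * u' i then (1:ℤ) else if β i + t * u' i < 0 then -1 else 0) := by
    by_cases h1 : 0 < β i + t * u i
    · rw [if_pos h1, if_pos (hsgn.1.1 h1)]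
    · rw [if_neg h1, if_neg (fun hc => h1 (hsgn.1.2 hc))]
      by_cases h2 : β i + t * u i < 0
      · rw [if_pos h2, if_pos (hsgn.2.1 h2)]
      · rw [if_neg h2, if_neg (fun hc => h2 (hsgn.2.2 hc))]
  show (_ : ℤ) * _ = _ * _
  rw [hfac]
  congr 1
  exact_mod_cast hcard
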